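/- Let G be a finite p-group and φ : H → G a simple virtual endomorphism from a maximal subgroup H. If U ≤ H is a nontrivial uniform (powerful and torsion-free-ranked, i.e., powerful with |U^{p^i} : U^{p^{i+1}}| constant) normal subgroup of G, then exp(U) ≤ exp(G/U) for p odd, and exp(U) ≤ 4·exp(G/U) for p = 2. -/

import Mathlib

/-- A virtual endomorphism `φ : H → G` is *simple* if the only subgroup of `H`
which is normal in `G` and `φ`-invariant is the trivial subgroup. -/
def IsSimpleVirtualEndo {G : Type*} [Group G] (H : Subgroup G) (φ : H →* G) : Prop :=
  ∀ K : Subgroup G, K ≤ H → K.Normal → Subgroup.map φ (K.subgroupOf H) ≤ K → K = ⊥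

/-- The subgroup generated by all `k`-th powers of elements of `G`. -/
def subgroupPow (G : Type*) [Group G] (k : ℕ) : Subgroup G :=
  Subgroup.closure {x : G | ∃ y : G, x = y ^ k}

open scoped commutatorElement

set_option linter.unusedSectionVars false

namespace SV19

open Subgroup

variable {Γ : Type*} [Group Γ]

/-- set of q-th powers of elements of N -/
def pset (q : ℕ) (N : Subgroup Γ) : Set Γ := {x : Γ | ∃ y ∈ N, y ^ q = x}

/-- subgroup generated by q-th powers of N -/
def agemo (q : ℕ) (N : Subgroup Γ) : Subgroup Γ := Subgroup.closure (pset q N)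

lemma pow_mem_agemo {q : ℕ} {N : Subgroup Γ} {y : Γ} (hy : y ∈ N) : y ^ q ∈ agemo q N :=
  Subgroup.subset_closure ⟨y, hy, rfl⟩

lemma agemo_le {q : ℕ} {N : Subgroup Γ} : agemo q N ≤ N := by
  apply Subgroup.closure_le _ |>.2
  rintro x ⟨y, hy, rfl⟩
  exact pow_mem hy q

lemma agemo_mono {q : ℕ} {N M : Subgroup Γ} (h : N ≤ M) : agemo q N ≤ agemo q M := by
  apply Subgroup.closure_mono
  rintro x ⟨y, hy, rfl⟩
  exact ⟨y, h hy, rfl⟩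

/-- closure of a conjugation-stable set is normal -/
lemma closure_normal_of_conj {S : Set Γ}
    (hS : ∀ x ∈ S, ∀ g : Γ, g * x * g⁻¹ ∈ S) : (Subgroup.closure S).Normal := by
  constructor
  intro n hn g
  induction hn using Subgroup.closure_induction with
  | mem x hx => exact Subgroup.subset_closure (hS x hx g)
  | one => simpa using (Subgroup.closure S).one_mem
  | mul x y _ _ hx hy =>
      have : g * (x * y) * g⁻¹ = (g * x * g⁻¹) * (g * y * g⁻¹) := by group
      rw [this]; exact mul_mem hx hy
  | inv x _ hx =>
      have : g * x⁻¹ * g⁻¹ = (g * x * g⁻¹)⁻¹ := by group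
      rw [this]; exact inv_mem hx

lemma agemo_normal {q : ℕ} {N : Subgroup Γ} (hN : N.Normal) : (agemo q N).Normal := by
  apply closure_normal_of_conj
  rintro x ⟨y, hy, rfl⟩ g
  exact ⟨g * y * g⁻¹, hN.conj_mem y hy g, by rw [conj_pow]⟩

/-- commutator with closure: generator reduction -/
lemma commutator_closure_le {S : Set Γ} {K : Subgroup Γ} (hK : K.Normal)
    (h : ∀ s ∈ S, ∀ g : Γ, ⁅s, g⁆ ∈ K) : ⁅Subgroup.closure S, (⊤ : Subgroup Γ)⁆ ≤ K := by
  rw [Subgroup.commutator_le]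
  intro x hx g _
  induction hx using Subgroup.closure_induction with
  | mem s hs => exact h s hs g
  | one => simpa using K.one_mem
  | mul a b _ _ ha hb =>
      have : ⁅a * b, g⁆ = a * ⁅b, g⁆ * a⁻¹ * ⁅a, g⁆ := by
        simp only [commutatorElement_def]; group
      rw [this]
      exact mul_mem (hK.conj_mem _ hb a) ha
  | inv a _ ha =>
      have : ⁅a⁻¹, g⁆ = a⁻¹ * ⁅a, g⁆⁻¹ * a := by
        simp only [commutatorElement_def]; group
      rw [this]
      have := hK.conj_mem _ (inv_mem ha) a⁻¹
      simpa using this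

lemma commutator_le_of_normal {N : Subgroup Γ} (hN : N.Normal) :
    ⁅N, (⊤ : Subgroup Γ)⁆ ≤ N := by
  rw [Subgroup.commutator_le]
  intro n hn g _
  have : ⁅n, g⁆ = n * (g * n⁻¹ * g⁻¹) := by simp only [commutatorElement_def]; group
  rw [this]
  exact mul_mem hn (hN.conj_mem _ (inv_mem hn) g)

lemma commutator_sup_le {A B K : Subgroup Γ} (hK : K.Normal)
    (hA : ⁅A, (⊤ : Subgroup Γ)⁆ ≤ K) (hB : ⁅B, (⊤ : Subgroup Γ)⁆ ≤ K) :
    ⁅A ⊔ B, (⊤ : Subgroup Γ)⁆ ≤ K := by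
  have hAB : A ⊔ B = Subgroup.closure ((A : Set Γ) ∪ B) := by
    rw [Subgroup.closure_union, Subgroup.closure_eq, Subgroup.closure_eq]
  rw [hAB]
  apply commutator_closure_le hK
  rintro s (hs | hs) g
  · exact hA (Subgroup.commutator_mem_commutator hs (Subgroup.mem_top g))
  · exact hB (Subgroup.commutator_mem_commutator hs (Subgroup.mem_top g))

end SV19


namespace SV19

open Subgroup

variable {Γ : Type*} [Group Γ]

lemma lcs_succ_comm (n : ℕ) :
    Subgroup.lowerCentralSeries (⊤ : Subgroup Γ) (n + 1) = ⁅Subgroup.lowerCentralSeries (⊤ : Subgroup Γ) n, (⊤ : Subgroup Γ)⁆ :=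
  Subgroup.lowerCentralSeries_succ _ n

/-- Nilpotency absorption: if X ≤ N ⊔ [X,Γ] with X, N normal, Γ a finite p-group, then X ≤ N. -/
lemma nal [Finite Γ] {p : ℕ} (hp : p.Prime) (hΓ : IsPGroup p Γ)
    {X N : Subgroup Γ} (hX : X.Normal) (hN : N.Normal)
    (h : X ≤ N ⊔ ⁅X, (⊤ : Subgroup Γ)⁆) : X ≤ N := by
  haveI := Fact.mk hp
  
  haveI := hX; haveI := hN
  haveI hnil : Group.IsNilpotent Γ := hΓ.isNilpotent
  obtain ⟨n, hn⟩ := Subgroup.nilpotent_iff_lowerCentralSeries.1 hnil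
  let D : ℕ → Subgroup Γ := fun k => (fun (A : Subgroup Γ) => ⁅A, (⊤ : Subgroup Γ)⁆)^[k] X
  have hD0 : D 0 = X := rfl
  have hDsucc : ∀ k, D (k + 1) = ⁅D k, (⊤ : Subgroup Γ)⁆ := by
    intro k
    simp only [D, Function.iterate_succ_apply']
  have hDnorm : ∀ k, (D k).Normal := by
    intro k
    induction k with
    | zero => exact hD0 ▸ hX
    | succ k ih => rw [hDsucc]; exact @Subgroup.commutator_normal _ _ _ _ ih (by infer_instance : (⊤ : Subgroup Γ).Normal)
  have hDlcs : ∀ k, D k ≤ Subgroup.lowerCentralSeries (⊤ : Subgroup Γ) k := by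
    intro k
    induction k with
    | zero => simp [hD0, Subgroup.lowerCentralSeries]
    | succ k ih =>
        rw [hDsucc, lcs_succ_comm]
        exact Subgroup.commutator_mono ih le_rfl
  have hmain : ∀ k, X ≤ N ⊔ D k := by
    intro k
    induction k with
    | zero => rw [hD0]; exact le_sup_of_le_right le_rfl
    | succ k ih =>
        refine h.trans ?_
        have h2 : ⁅X, (⊤ : Subgroup Γ)⁆ ≤ N ⊔ D (k+1) := by
          rw [hDsucc]
          calc ⁅X, (⊤ : Subgroup Γ)⁆ ≤ ⁅N ⊔ D k, (⊤ : Subgroup Γ)⁆ :=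
                Subgroup.commutator_mono ih le_rfl
            _ ≤ N ⊔ ⁅D k, (⊤ : Subgroup Γ)⁆ := by
                haveI := hDnorm k
                apply commutator_sup_le
                · infer_instance
                · exact (commutator_le_of_normal hN).trans le_sup_left
                · exact le_sup_right
        exact sup_le le_sup_left h2
  have h3 := hmain n
  have hb : D n = ⊥ := le_bot_iff.1 (hn ▸ hDlcs n)
  rw [hb, sup_bot_eq] at h3
  exact h3

end SV19


namespace SV19

open Subgroup

variable {Γ : Type*} [Group Γ]

lemma agemo_map_le {Δ : Type*} [Group Δ] (f : Γ →* Δ) (q : ℕ) (N : Subgroup Γ) :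
    Subgroup.map f (agemo q N) ≤ agemo q (Subgroup.map f N) := by
  rw [agemo, MonoidHom.map_closure]
  apply Subgroup.closure_mono
  rintro x ⟨y, ⟨z, hz, rfl⟩, rfl⟩
  exact ⟨f z, ⟨z, hz, rfl⟩, (map_pow f z q).symm⟩

/-- A finite p-group in which every element is a product of p-th powers is trivial. -/
lemma eq_one_of_top_le_agemo {Δ : Type*} [Group Δ] [Finite Δ] {p : ℕ} (hp : p.Prime)
    (hΔ : IsPGroup p Δ) (h : (⊤ : Subgroup Δ) ≤ agemo p (⊤ : Subgroup Δ)) :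
    ∀ x : Δ, x = 1 := by
  haveI := Fact.mk hp
  have habel : ∀ a : Abelianization Δ, a = 1 := by
    have hA : IsPGroup p (Abelianization Δ) := hΔ.to_quotient _
    obtain ⟨n, hcard⟩ := IsPGroup.iff_card.1 hA
    have hmem : ∀ b : Abelianization Δ, b ∈ agemo p (⊤ : Subgroup (Abelianization Δ)) := by
      intro b
      obtain ⟨x, rfl⟩ : ∃ x, Abelianization.of x = b := QuotientGroup.mk_surjective b
      have h1 : Abelianization.of x ∈ Subgroup.map Abelianization.of (agemo p ⊤) :=
        Subgroup.mem_map_of_mem _ (h (Subgroup.mem_top x))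
      exact agemo_mono le_top (agemo_map_le _ p ⊤ h1)
    -- every element of agemo p ⊤ in a comm group is a p-th power
    have hpow : ∀ b : Abelianization Δ, ∃ c, c ^ p = b := by
      intro b
      have hb := hmem b
      induction hb using Subgroup.closure_induction with
      | mem x hx => obtain ⟨y, _, rfl⟩ := hx; exact ⟨y, rfl⟩
      | one => exact ⟨1, one_pow p⟩
      | mul x y _ _ hx hy =>
          obtain ⟨c, rfl⟩ := hx; obtain ⟨d, rfl⟩ := hy
          exact ⟨c * d, mul_pow c d p⟩
      | inv x _ hx => obtain ⟨c, rfl⟩ := hx; exact ⟨c⁻¹, by rw [inv_pow]⟩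
    intro a
    have hk : ∀ k, ∃ c, c ^ (p ^ k) = a := by
      intro k
      induction k with
      | zero => exact ⟨a, pow_one a⟩
      | succ k ih =>
          obtain ⟨c, rfl⟩ := ih
          obtain ⟨d, rfl⟩ := hpow c
          exact ⟨d, by rw [← pow_mul, ← pow_succ']⟩
    obtain ⟨c, rfl⟩ := hk n
    rw [← hcard]
    exact pow_card_eq_one'
  -- hence commutator Δ = ⊤, and nilpotency forces triviality
  have hcomm : ∀ x : Δ, x ∈ commutator Δ := by
    intro x
    have := habel (Abelianization.of x)
    exact (QuotientGroup.eq_one_iff x).1 this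
  haveI hnil : Group.IsNilpotent Δ := hΔ.isNilpotent
  obtain ⟨n, hn⟩ := Subgroup.nilpotent_iff_lowerCentralSeries.1 hnil
  have hlcs : ∀ k, ∀ x : Δ, x ∈ Subgroup.lowerCentralSeries (⊤ : Subgroup Δ) k := by
    intro k
    induction k with
    | zero => intro x; trivial
    | succ k ih =>
        intro x
        rw [lcs_succ_comm]
        have h1 : commutator Δ ≤ ⁅Subgroup.lowerCentralSeries (⊤ : Subgroup Δ) k, (⊤ : Subgroup Δ)⁆ :=
          Subgroup.commutator_mono (fun y _ => ih y) le_rfl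
        exact h1 (hcomm x)
  intro x
  have := hlcs n x
  rw [hn] at this
  exact this

end SV19


namespace SV19

open Subgroup

variable {Γ : Type*} [Group Γ]

lemma eq_bot_of_le_agemo [Finite Γ] {p : ℕ} (hp : p.Prime) (hΓ : IsPGroup p Γ)
    {X : Subgroup Γ} (h : X ≤ agemo p X) : X = ⊥ := by
  have hX : IsPGroup p ↥X := hΓ.to_subgroup X
  have htop : (⊤ : Subgroup ↥X) ≤ agemo p (⊤ : Subgroup ↥X) := by
    rintro ⟨x, hx⟩ -
    have h1 : x ∈ agemo p X := h hx
    have h2 : agemo p X ≤ Subgroup.map X.subtype (agemo p (⊤ : Subgroup ↥X)) := by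
      simp only [agemo]
      rw [MonoidHom.map_closure]
      apply Subgroup.closure_le _ |>.2
      rintro z ⟨y, hy, rfl⟩
      apply Subgroup.subset_closure
      exact ⟨(⟨y, hy⟩ : ↥X) ^ p, ⟨⟨y, hy⟩, Subgroup.mem_top _, rfl⟩, rfl⟩
    obtain ⟨a, ha, hax⟩ := h2 h1
    have : a = ⟨x, hx⟩ := Subtype.ext hax
    rwa [this] at ha
  have := eq_one_of_top_le_agemo hp hX htop
  rw [Subgroup.eq_bot_iff_forall]
  intro x hx
  have := this ⟨x, hx⟩
  exact congrArg Subtype.val this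

/-- Full absorption: X ≤ N ⊔ agemo p X ⊔ [X, Γ] implies X ≤ N. -/
lemma nal2 [Finite Γ] {p : ℕ} (hp : p.Prime) (hΓ : IsPGroup p Γ)
    {X N : Subgroup Γ} (hX : X.Normal) (hN : N.Normal)
    (h : X ≤ N ⊔ agemo p X ⊔ ⁅X, (⊤ : Subgroup Γ)⁆) : X ≤ N := by
  haveI := hX; haveI := hN
  haveI : (agemo p X).Normal := agemo_normal hX
  have step1 : X ≤ N ⊔ agemo p X := nal hp hΓ hX inferInstance h
  -- pass to quotient by N
  intro x hx
  let π := QuotientGroup.mk' N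
  have hsurj : Function.Surjective π := QuotientGroup.mk'_surjective N
  set Xb := Subgroup.map π X with hXb
  have hXbN : Xb.Normal := Subgroup.Normal.map hX π hsurj
  have hle : Xb ≤ agemo p Xb := by
    rintro z ⟨y, hy, rfl⟩
    have h1 := step1 hy
    have h1' : y ∈ (↑(N ⊔ agemo p X) : Set Γ) := h1
    rw [Subgroup.normal_mul] at h1'
    obtain ⟨a, ha, b, hb, rfl⟩ := h1'
    have haz : π a = 1 := (QuotientGroup.eq_one_iff a).2 ha
    have hbz : π b ∈ agemo p Xb := agemo_map_le π p X (Subgroup.mem_map_of_mem π hb)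
    rw [map_mul, haz, one_mul]
    exact hbz
  have hbot : Xb = ⊥ := eq_bot_of_le_agemo hp (hΓ.to_quotient N) hle
  have : π x ∈ Xb := Subgroup.mem_map_of_mem π hx
  rw [hbot, Subgroup.mem_bot] at this
  exact (QuotientGroup.eq_one_iff x).1 this

end SV19


namespace SV19

variable {Q : Type*} [Group Q]

lemma pow_mul_comm_center {a b : Q} (h : ∀ g : Q, Commute ⁅b, a⁆ g) (n : ℕ) :
    b ^ n * a = a * b ^ n * ⁅b, a⁆ ^ n := by
  set e := ⁅b, a⁆ with hedef
  have hmove : ∀ (x : Q) (m : ℕ), e ^ m * x = x * e ^ m := fun x m => ((h x).pow_left m).eq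
  have hmove1 : ∀ x : Q, e * x = x * e := fun x => (h x).eq
  induction n with
  | zero => simp
  | succ n ih =>
      have hba : b * a = a * b * e := by
        have h1 : b * a = e * (a * b) := by rw [hedef]; simp only [commutatorElement_def]; group
        rw [h1, hmove1 (a * b)]
      calc b ^ (n+1) * a = b * (b ^ n * a) := by rw [pow_succ']; group
        _ = b * (a * b ^ n * e ^ n) := by rw [ih]
        _ = (b * a) * (b ^ n * e ^ n) := by group
        _ = (a * b * e) * (b ^ n * e ^ n) := by rw [hba]
        _ = (a * b) * (e * b ^ n) * e ^ n := by group
        _ = (a * b) * (b ^ n * e) * e ^ n := by rw [hmove1 (b ^ n)]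
        _ = a * b ^ (n+1) * e ^ (n+1) := by rw [pow_succ, pow_succ']; group

lemma mul_pow_center {a b : Q} (h : ∀ g : Q, Commute ⁅b, a⁆ g) (n : ℕ) :
    (a * b) ^ n = a ^ n * b ^ n * ⁅b, a⁆ ^ n.choose 2 := by
  set e := ⁅b, a⁆ with hedef
  have hmove : ∀ (x : Q) (m : ℕ), e ^ m * x = x * e ^ m := fun x m => ((h x).pow_left m).eq
  induction n with
  | zero => simp
  | succ n ih =>
      have hch : (n+1).choose 2 = n.choose 2 + n := by
        rw [Nat.choose_succ_succ, Nat.choose_one_right, Nat.add_comm]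
      calc (a * b) ^ (n+1) = (a * b) ^ n * (a * b) := by rw [pow_succ]
        _ = (a ^ n * b ^ n * e ^ n.choose 2) * (a * b) := by rw [ih]
        _ = a ^ n * b ^ n * (e ^ n.choose 2 * a) * b := by group
        _ = a ^ n * b ^ n * (a * e ^ n.choose 2) * b := by rw [hmove a]
        _ = a ^ n * (b ^ n * a) * (e ^ n.choose 2 * b) := by group
        _ = a ^ n * (b ^ n * a) * (b * e ^ n.choose 2) := by rw [hmove b]
        _ = a ^ n * (a * b ^ n * e ^ n) * (b * e ^ n.choose 2) := by
              rw [pow_mul_comm_center h]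
        _ = a ^ (n+1) * b ^ n * (e ^ n * b) * e ^ n.choose 2 := by
              rw [pow_succ']; group
        _ = a ^ (n+1) * b ^ n * (b * e ^ n) * e ^ n.choose 2 := by rw [hmove b]
        _ = a ^ (n+1) * b ^ (n+1) * e ^ ((n+1).choose 2) := by
              rw [hch, pow_add, pow_succ]; group

lemma comm_pow_center {y g : Q} (h : ∀ z : Q, Commute ⁅y, ⁅y, g⁆⁆ z) (n : ℕ) :
    ⁅y ^ n, g⁆ = ⁅y, g⁆ ^ n * ⁅y, ⁅y, g⁆⁆ ^ n.choose 2 := by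
  set c := ⁅y, g⁆ with hc
  set d := ⁅y, c⁆ with hd
  have hmove : ∀ (x : Q) (m : ℕ), d ^ m * x = x * d ^ m := fun x m => ((h x).pow_left m).eq
  have hconj : ∀ m : ℕ, y * c ^ m * y⁻¹ = (d * c) ^ m := by
    intro m
    have h1 : y * c * y⁻¹ = d * c := by rw [hd]; simp only [commutatorElement_def]; group
    rw [← h1, conj_pow]
  induction n with
  | zero => simp
  | succ n ih =>
      have hch : (n+1).choose 2 = n.choose 2 + n := by
        rw [Nat.choose_succ_succ, Nat.choose_one_right, Nat.add_comm]
      have hid : ⁅y ^ (n+1), g⁆ = y * ⁅y ^ n, g⁆ * y⁻¹ * c := by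
        rw [pow_succ', hc]; simp only [commutatorElement_def]; group
      have hdcn : (d * c) ^ n = d ^ n * c ^ n := (h c).mul_pow n
      calc ⁅y ^ (n+1), g⁆ = y * ⁅y ^ n, g⁆ * y⁻¹ * c := hid
        _ = y * (c ^ n * d ^ n.choose 2) * y⁻¹ * c := by rw [ih]
        _ = (y * c ^ n * y⁻¹) * (y * d ^ n.choose 2 * y⁻¹) * c := by group
        _ = (d * c) ^ n * (y * d ^ n.choose 2 * y⁻¹) * c := by rw [hconj]
        _ = (d * c) ^ n * (y * y⁻¹ * d ^ n.choose 2) * c := by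
              rw [show y * d ^ n.choose 2 * y⁻¹ = y * (d ^ n.choose 2 * y⁻¹) by group,
                hmove y⁻¹]
              group
        _ = d ^ n * c ^ n * d ^ n.choose 2 * c := by rw [hdcn]; group
        _ = d ^ n * c ^ n * (d ^ n.choose 2 * c) := by group
        _ = d ^ n * c ^ n * (c * d ^ n.choose 2) := by rw [hmove c]
        _ = (d ^ n * c ^ (n+1)) * d ^ n.choose 2 := by rw [pow_succ]; group
        _ = c ^ (n+1) * d ^ n * d ^ n.choose 2 := by rw [hmove (c ^ (n+1)) n]
        _ = c ^ (n+1) * d ^ ((n+1).choose 2) := by rw [hch, pow_add]; group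

end SV19


namespace SV19

open Subgroup

variable {Γ : Type*} [Group Γ]

/-- the descending chain of iterated p-th power subgroups -/
def Zc (Γ : Type*) [Group Γ] (p : ℕ) : ℕ → Subgroup Γ
  | 0 => ⊤
  | (k+1) => agemo p (Zc Γ p (k))

lemma Zc_zero (p : ℕ) : Zc Γ p 0 = ⊤ := rfl

lemma Zc_succ (p k : ℕ) : Zc Γ p (k+1) = agemo p (Zc Γ p k) := rfl

lemma Zc_normal (p : ℕ) : ∀ k, (Zc Γ p k).Normal := by
  intro k
  induction k with
  | zero => exact (inferInstance : (⊤ : Subgroup Γ).Normal)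
  | succ k ih => exact agemo_normal ih

lemma Zc_succ_le (p k : ℕ) : Zc Γ p (k+1) ≤ Zc Γ p k := agemo_le

lemma Zc_antitone {p : ℕ} {j k : ℕ} (h : j ≤ k) : Zc Γ p k ≤ Zc Γ p j := by
  induction k with
  | zero => simp_all
  | succ k ih =>
      rcases Nat.lt_or_ge j (k+1) with h1 | h1
      · exact (Zc_succ_le p k).trans (ih (Nat.lt_succ_iff.1 h1))
      · have : j = k + 1 := le_antisymm h h1
        rw [this]

lemma Zc_pow_mem {p : ℕ} {k : ℕ} {y : Γ} (hy : y ∈ Zc Γ p k) : y ^ p ∈ Zc Γ p (k+1) :=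
  pow_mem_agemo hy

lemma Zc_pow_pow_mem {p : ℕ} {k : ℕ} {y : Γ} (hy : y ∈ Zc Γ p k) (t : ℕ) :
    y ^ (p ^ t) ∈ Zc Γ p (k + t) := by
  induction t with
  | zero => simpa using hy
  | succ t ih =>
      have := Zc_pow_mem ih
      rw [← pow_mul, ← pow_succ] at this
      exact this

-- commutator identities
lemma comm_mul_left (a b g : Γ) : ⁅a * b, g⁆ = a * ⁅b, g⁆ * a⁻¹ * ⁅a, g⁆ := by
  simp only [commutatorElement_def]; group

lemma comm_inv_left (a g : Γ) : ⁅a⁻¹, g⁆ = a⁻¹ * ⁅a, g⁆⁻¹ * a := by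
  simp only [commutatorElement_def]; group

lemma comm_sq_left (a g : Γ) : ⁅a ^ 2, g⁆ = ⁅a, ⁅a, g⁆⁆ * ⁅a, g⁆ ^ 2 := by
  rw [pow_two, pow_two]
  simp only [commutatorElement_def]
  group

lemma comm_inv_pair (a b : Γ) : ⁅a, b⁆ = ⁅b, a⁆⁻¹ := by
  simp only [commutatorElement_def]; group

section Cascade

variable [Finite Γ] {p : ℕ}

/-- odd cascade: `[Z_k, Γ] ≤ Z_{k+1}` -/
lemma cascade_odd (hp : p.Prime) (hΓ : IsPGroup p Γ) (hodd : Odd p)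
    (hbase : ⁅(⊤ : Subgroup Γ), (⊤ : Subgroup Γ)⁆ ≤ Zc Γ p 1) :
    ∀ k, ⁅Zc Γ p k, (⊤ : Subgroup Γ)⁆ ≤ Zc Γ p (k+1) := by
  intro k
  induction k with
  | zero => exact hbase
  | succ k ih =>
      set X := ⁅Zc Γ p (k+1), (⊤ : Subgroup Γ)⁆ with hXdef
      haveI hZk1 : (Zc Γ p (k+1)).Normal := Zc_normal p (k+1)
      haveI hZk2 : (Zc Γ p (k+2)).Normal := Zc_normal p (k+2)
      haveI hXn : X.Normal := Subgroup.commutator_normal _ _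
      haveI hagn : (agemo p X).Normal := agemo_normal hXn
      haveI hXtn : (⁅X, (⊤ : Subgroup Γ)⁆).Normal := Subgroup.commutator_normal _ _
      set E := Zc Γ p (k+2) ⊔ agemo p X ⊔ ⁅X, (⊤ : Subgroup Γ)⁆ with hEdef
      haveI hEn : E.Normal := by rw [hEdef]; infer_instance
      have hE1 : Zc Γ p (k+2) ≤ E := le_sup_of_le_left le_sup_left
      have hE2 : agemo p X ≤ E := le_sup_of_le_left le_sup_right
      have hE3 : ⁅X, (⊤ : Subgroup Γ)⁆ ≤ E := le_sup_right
      have hXE : X ≤ E := by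
        rw [hXdef, Zc_succ]
        apply commutator_closure_le hEn
        rintro s ⟨y, hy, rfl⟩ g
        -- work in the quotient by E
        set π := QuotientGroup.mk' E with hπ
        have hker : ∀ x : Γ, π x = 1 ↔ x ∈ E := fun x => QuotientGroup.eq_one_iff x
        rw [← hker]
        have hc : ⁅y, g⁆ ∈ Zc Γ p (k+1) := ih (Subgroup.commutator_mem_commutator hy (Subgroup.mem_top g))
        have hd : ⁅y, ⁅y, g⁆⁆ ∈ X := by
          rw [hXdef, Subgroup.commutator_comm]
          exact Subgroup.commutator_mem_commutator (Subgroup.mem_top y) hc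
        have hcen : ∀ z : (Γ ⧸ E), Commute ⁅π y, ⁅π y, π g⁆⁆ z := by
          intro z
          obtain ⟨w, rfl⟩ := QuotientGroup.mk'_surjective E z
          rw [← commutatorElement_eq_one_iff_commute]
          have : ⁅⁅y, ⁅y, g⁆⁆, w⁆ ∈ E :=
            hE3 (Subgroup.commutator_mem_commutator hd (Subgroup.mem_top w))
          rw [← map_commutatorElement, ← map_commutatorElement, ← map_commutatorElement]
          exact (hker _).2 this
        have hmain : π ⁅y ^ p, g⁆ = ⁅π y, π g⁆ ^ p * ⁅π y, ⁅π y, π g⁆⁆ ^ (p.choose 2) := by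
          have h1 : π ⁅y ^ p, g⁆ = ⁅(π y) ^ p, π g⁆ := by
            rw [map_commutatorElement, map_pow]
          rw [h1]
          exact comm_pow_center hcen p
        have hcp : (⁅π y, π g⁆ : Γ ⧸ E) ^ p = 1 := by
          have h1 : (⁅π y, π g⁆ : Γ ⧸ E) ^ p = π (⁅y, g⁆ ^ p) := by
            rw [map_pow, map_commutatorElement]
          rw [h1, hker]
          exact hE1 (Zc_pow_mem hc)
        have hdp : (⁅π y, ⁅π y, π g⁆⁆ : Γ ⧸ E) ^ p = 1 := by
          have h1 : (⁅π y, ⁅π y, π g⁆⁆ : Γ ⧸ E) ^ p = π (⁅y, ⁅y, g⁆⁆ ^ p) := by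
            rw [map_pow, map_commutatorElement, map_commutatorElement]
          rw [h1, hker]
          exact hE2 (pow_mem_agemo hd)
        obtain ⟨t, ht⟩ := hodd
        have hch : p.choose 2 = p * t := by
          rw [Nat.choose_two_right]
          have h1 : p - 1 = 2 * t := by omega
          rw [h1, show p * (2 * t) = p * t * 2 by ring]
          exact Nat.mul_div_cancel _ (by norm_num)
        rw [hmain, hcp, hch, pow_mul, hdp, one_pow, one_mul]
      -- conclude with nal2
      have := nal2 hp hΓ hXn hZk2 (by
        calc X ≤ E := hXE
          _ = Zc Γ p (k+2) ⊔ agemo p X ⊔ ⁅X, (⊤ : Subgroup Γ)⁆ := hEdef)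
      exact this

end Cascade

end SV19


namespace SV19

open Subgroup

variable {Γ : Type*} [Group Γ]

/-- 2-adic cascade: `[Z_k, Γ] ≤ Z_{k+2}` -/
lemma cascade_two [Finite Γ] (hΓ : IsPGroup 2 Γ)
    (hbase : ⁅(⊤ : Subgroup Γ), (⊤ : Subgroup Γ)⁆ ≤ Zc Γ 2 2) :
    ∀ k, ⁅Zc Γ 2 k, (⊤ : Subgroup Γ)⁆ ≤ Zc Γ 2 (k+2) := by
  have hp : (2 : ℕ).Prime := Nat.prime_two
  intro k
  induction k with
  | zero => exact hbase
  | succ k ih =>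
      set X := ⁅Zc Γ 2 (k+1), (⊤ : Subgroup Γ)⁆ with hXdef
      haveI hZk1 : (Zc Γ 2 (k+1)).Normal := Zc_normal 2 (k+1)
      haveI hZk3 : (Zc Γ 2 (k+3)).Normal := Zc_normal 2 (k+3)
      haveI hXn : X.Normal := Subgroup.commutator_normal _ _
      haveI hagn : (agemo 2 X).Normal := agemo_normal hXn
      haveI hXtn : (⁅X, (⊤ : Subgroup Γ)⁆).Normal := Subgroup.commutator_normal _ _
      set E := Zc Γ 2 (k+3) ⊔ agemo 2 X ⊔ ⁅X, (⊤ : Subgroup Γ)⁆ with hEdef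
      haveI hEn : E.Normal := by rw [hEdef]; infer_instance
      have hE1 : Zc Γ 2 (k+3) ≤ E := le_sup_of_le_left le_sup_left
      have hE2 : agemo 2 X ≤ E := le_sup_of_le_left le_sup_right
      have hE3 : ⁅X, (⊤ : Subgroup Γ)⁆ ≤ E := le_sup_right
      -- subclaim : commutators of Z_{k+2} with anything land in E
      have hsub : ∀ c ∈ Zc Γ 2 (k+2), ∀ w : Γ, ⁅c, w⁆ ∈ E := by
        intro c hc
        induction hc using Subgroup.closure_induction with
        | mem f hf =>
            obtain ⟨u, hu, rfl⟩ := hf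
            intro w
            rw [comm_sq_left]
            apply mul_mem
            · have h1 : ⁅u, w⁆ ∈ X := Subgroup.commutator_mem_commutator hu (Subgroup.mem_top w)
              have h2 : ⁅u, ⁅u, w⁆⁆ ∈ ⁅X, (⊤ : Subgroup Γ)⁆ := by
                rw [Subgroup.commutator_comm]
                exact Subgroup.commutator_mem_commutator (Subgroup.mem_top u) h1
              exact hE3 h2
            · have h1 : ⁅u, w⁆ ∈ X := Subgroup.commutator_mem_commutator hu (Subgroup.mem_top w)
              exact hE2 (pow_mem_agemo h1)
        | one => intro w; simpa using E.one_mem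
        | mul a b _ _ ha hb =>
            intro w
            rw [comm_mul_left]
            exact mul_mem (hEn.conj_mem _ (hb w) a) (ha w)
        | inv a _ ha =>
            intro w
            rw [comm_inv_left]
            have := hEn.conj_mem _ (inv_mem (ha w)) a⁻¹
            simpa using this
      have hXE : X ≤ E := by
        rw [hXdef, Zc_succ]
        apply commutator_closure_le hEn
        rintro s ⟨y, hy, rfl⟩ g
        have hc : ⁅y, g⁆ ∈ Zc Γ 2 (k+2) := ih (Subgroup.commutator_mem_commutator hy (Subgroup.mem_top g))
        rw [comm_sq_left]
        apply mul_mem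
        · -- ⁅y, ⁅y,g⁆⁆ = ⁅⁅y,g⁆, y⁆⁻¹ ∈ E by hsub
          rw [comm_inv_pair]
          exact inv_mem (hsub _ hc y)
        · exact hE1 (Zc_pow_mem hc)
      exact nal2 hp hΓ hXn hZk3 (hXE.trans (le_of_eq hEdef))

end SV19


namespace SV19

open Subgroup

variable {Γ : Type*} [Group Γ]

lemma Zc_exists_bot [Finite Γ] {p : ℕ} (hp : p.Prime) (hΓ : IsPGroup p Γ) :
    ∃ K, Zc Γ p K = ⊥ := by
  by_contra hcon
  push_neg at hcon
  have hstrict : ∀ k, Nat.card (Zc Γ p (k+1)) < Nat.card (Zc Γ p k) := by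
    intro k
    have hle := Zc_succ_le (Γ := Γ) p k
    rcases lt_or_ge (Nat.card (Zc Γ p (k+1))) (Nat.card (Zc Γ p k)) with h | h
    · exact h
    · exfalso
      have heq : Zc Γ p (k+1) = Zc Γ p k := Subgroup.eq_of_le_of_card_ge hle h
      have : Zc Γ p k ≤ agemo p (Zc Γ p k) := by
        rw [← Zc_succ, heq]
      exact hcon k (eq_bot_of_le_agemo hp hΓ this)
  have hbound : ∀ k, Nat.card (Zc Γ p k) + k ≤ Nat.card (Zc Γ p 0) := by
    intro k
    induction k with
    | zero => simp
    | succ k ih =>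
        have := hstrict k
        omega
  have := hbound (Nat.card (Zc Γ p 0) + 1)
  have hpos : 0 < Nat.card (Zc Γ p (Nat.card (Zc Γ p 0) + 1)) := Nat.card_pos
  omega

section Absorb

variable [Finite Γ] {p : ℕ}

/-- modulo one level deeper, p-th powers multiply -/
lemma pow_mul_pow_absorb (hp : p.Prime) (hΓ : IsPGroup p Γ)
    (hcas : ∀ t, ⁅Zc Γ p t, (⊤ : Subgroup Γ)⁆ ≤ Zc Γ p (t+1))
    (hcas2 : p = 2 → ∀ t, ⁅Zc Γ p t, (⊤ : Subgroup Γ)⁆ ≤ Zc Γ p (t+2))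
    {j : ℕ} (hj : 1 ≤ j) {v : Γ} (hv : v ∈ Zc Γ p (j-1)) (z : Γ) :
    ∃ w ∈ Zc Γ p (j+1), z ^ p * v ^ p = (z * v) ^ p * w := by
  haveI hEn : (Zc Γ p (j+1)).Normal := Zc_normal p (j+1)
  set π := QuotientGroup.mk' (Zc Γ p (j+1)) with hπ
  have hker : ∀ x : Γ, π x = 1 ↔ x ∈ Zc Γ p (j+1) := fun x => QuotientGroup.eq_one_iff x
  have hvz : ⁅v, z⁆ ∈ Zc Γ p j := by
    have h1 : ⁅v, z⁆ ∈ ⁅Zc Γ p (j-1), (⊤ : Subgroup Γ)⁆ :=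
      Subgroup.commutator_mem_commutator hv (Subgroup.mem_top z)
    have h2 := hcas (j-1)
    rw [Nat.sub_add_cancel hj] at h2
    exact h2 h1
  have hcen : ∀ g : Γ ⧸ Zc Γ p (j+1), Commute ⁅π v, π z⁆ g := by
    intro g
    obtain ⟨w, rfl⟩ := QuotientGroup.mk'_surjective _ g
    rw [← commutatorElement_eq_one_iff_commute, ← map_commutatorElement, ← map_commutatorElement,
      hker]
    exact hcas j (Subgroup.commutator_mem_commutator hvz (Subgroup.mem_top w))
  have hkill : (⁅π v, π z⁆ : Γ ⧸ Zc Γ p (j+1)) ^ (p.choose 2) = 1 := by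
    by_cases hp2 : p = 2
    · subst hp2
      have h1 : ⁅v, z⁆ ∈ Zc Γ 2 (j+1) := by
        have h2 := hcas2 rfl (j-1)
        rw [show j - 1 + 2 = j + 1 by omega] at h2
        exact h2 (Subgroup.commutator_mem_commutator hv (Subgroup.mem_top z))
      have h3 : (⁅π v, π z⁆ : Γ ⧸ Zc Γ 2 (j+1)) = 1 := by
        rw [← map_commutatorElement, hker]; exact h1
      rw [h3, one_pow]
    · obtain ⟨t, ht⟩ := hp.odd_of_ne_two hp2
      have hch : p.choose 2 = p * t := by
        rw [Nat.choose_two_right]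
        have h1 : p - 1 = 2 * t := by omega
        rw [h1, show p * (2 * t) = p * t * 2 by ring]
        exact Nat.mul_div_cancel _ (by norm_num)
      have hep : (⁅π v, π z⁆ : Γ ⧸ Zc Γ p (j+1)) ^ p = 1 := by
        have h1 : (⁅π v, π z⁆ : Γ ⧸ Zc Γ p (j+1)) ^ p = π (⁅v, z⁆ ^ p) := by
          rw [map_pow, map_commutatorElement]
        rw [h1, hker]
        exact Zc_pow_mem hvz
      rw [hch, pow_mul, hep, one_pow]
  have hmp := mul_pow_center hcen p
  have hquot : π (z ^ p * v ^ p) = π ((z * v) ^ p) := by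
    rw [map_mul, map_pow, map_pow, map_pow, map_mul, hmp, hkill, mul_one]
  set w := ((z * v) ^ p)⁻¹ * (z ^ p * v ^ p) with hw
  refine ⟨w, ?_, by rw [hw]; group⟩
  rw [← hker]
  rw [hw, map_mul, map_inv, hquot]
  group

/-- fueled absorption -/
lemma absorb_fuel (hp : p.Prime) (hΓ : IsPGroup p Γ)
    (hcas : ∀ t, ⁅Zc Γ p t, (⊤ : Subgroup Γ)⁆ ≤ Zc Γ p (t+1))
    (hcas2 : p = 2 → ∀ t, ⁅Zc Γ p t, (⊤ : Subgroup Γ)⁆ ≤ Zc Γ p (t+2))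
    {K : ℕ} (hK : Zc Γ p K = ⊥) {j₀ : ℕ} (hj₀ : 1 ≤ j₀) :
    ∀ (i : ℕ) (j : ℕ), j₀ ≤ j → K ≤ j + i → ∀ w ∈ Zc Γ p j,
      ∀ z ∈ Zc Γ p (j₀ - 1), ∃ v ∈ Zc Γ p (j₀ - 1), z ^ p * w = v ^ p := by
  intro i
  induction i with
  | zero =>
      intro j hj hKj w hw z hz
      have : w = 1 := by
        have h1 : Zc Γ p j ≤ Zc Γ p K := Zc_antitone (by omega)
        rw [hK] at h1
        simpa using h1 hw
      exact ⟨z, hz, by rw [this, mul_one]⟩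
  | succ i ih =>
      intro j hj hKj w hw z₀ hz₀
      obtain ⟨j', rfl⟩ : ∃ j', j = j' + 1 := ⟨j - 1, by omega⟩
      rw [Zc_succ] at hw
      -- symmetrized predicate for closure induction
      have main : (∀ z ∈ Zc Γ p (j₀ - 1), ∃ v ∈ Zc Γ p (j₀ - 1), z ^ p * w = v ^ p) ∧
          (∀ z ∈ Zc Γ p (j₀ - 1), ∃ v ∈ Zc Γ p (j₀ - 1), z ^ p * w⁻¹ = v ^ p) := by
        induction hw using Subgroup.closure_induction with
        | mem u hu =>
            obtain ⟨u, hu, rfl⟩ := hu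
            constructor
            · intro z hz
              obtain ⟨w₁, hw₁, heq⟩ := pow_mul_pow_absorb (v := u) hp hΓ hcas hcas2
                (by omega : 1 ≤ j' + 1) (by simpa using hu) z
              have hzu : z * u ∈ Zc Γ p (j₀ - 1) :=
                mul_mem hz (Zc_antitone (by omega) hu)
              obtain ⟨v, hv, heq2⟩ := ih (j' + 2) (by omega) (by omega) w₁ hw₁ (z * u) hzu
              exact ⟨v, hv, by rw [heq, heq2]⟩
            · intro z hz
              have hui : u⁻¹ ∈ Zc Γ p j' := inv_mem hu
              obtain ⟨w₁, hw₁, heq⟩ := pow_mul_pow_absorb (v := u⁻¹) hp hΓ hcas hcas2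
                (by omega : 1 ≤ j' + 1) (by simpa using hui) z
              have hzu : z * u⁻¹ ∈ Zc Γ p (j₀ - 1) :=
                mul_mem hz (Zc_antitone (by omega) hui)
              obtain ⟨v, hv, heq2⟩ := ih (j' + 2) (by omega) (by omega) w₁ hw₁ (z * u⁻¹) hzu
              refine ⟨v, hv, ?_⟩
              rw [← inv_pow, heq, heq2]
        | one =>
            constructor
            · intro z hz; exact ⟨z, hz, by rw [mul_one]⟩
            · intro z hz; exact ⟨z, hz, by rw [inv_one, mul_one]⟩
        | mul a b _ _ ha hb =>
            constructor
            · intro z hz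
              obtain ⟨v₁, hv₁, h₁⟩ := ha.1 z hz
              obtain ⟨v₂, hv₂, h₂⟩ := hb.1 v₁ hv₁
              refine ⟨v₂, hv₂, ?_⟩
              rw [← mul_assoc, h₁, h₂]
            · intro z hz
              obtain ⟨v₁, hv₁, h₁⟩ := hb.2 z hz
              obtain ⟨v₂, hv₂, h₂⟩ := ha.2 v₁ hv₁
              refine ⟨v₂, hv₂, ?_⟩
              rw [mul_inv_rev, ← mul_assoc, h₁, h₂]
        | inv a _ ha =>
            refine ⟨ha.2, ?_⟩
            intro z hz
            rw [inv_inv]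
            exact ha.1 z hz
      exact main.1 z₀ hz₀

/-- every element of `Z_j` is a p-th power of an element of `Z_{j-1}` -/
lemma Zc_step_pow (hp : p.Prime) (hΓ : IsPGroup p Γ)
    (hcas : ∀ t, ⁅Zc Γ p t, (⊤ : Subgroup Γ)⁆ ≤ Zc Γ p (t+1))
    (hcas2 : p = 2 → ∀ t, ⁅Zc Γ p t, (⊤ : Subgroup Γ)⁆ ≤ Zc Γ p (t+2))
    {j : ℕ} (hj : 1 ≤ j) {x : Γ} (hx : x ∈ Zc Γ p j) :
    ∃ v ∈ Zc Γ p (j-1), x = v ^ p := by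
  obtain ⟨K, hK⟩ := Zc_exists_bot hp hΓ
  obtain ⟨v, hv, heq⟩ := absorb_fuel hp hΓ hcas hcas2 hK hj K j le_rfl (by omega) x hx
    1 (one_mem _)
  exact ⟨v, hv, by rw [← heq, one_pow, one_mul]⟩

/-- every element of `Z_k` is a `p^k`-th power -/
lemma Zc_elements (hp : p.Prime) (hΓ : IsPGroup p Γ)
    (hcas : ∀ t, ⁅Zc Γ p t, (⊤ : Subgroup Γ)⁆ ≤ Zc Γ p (t+1))
    (hcas2 : p = 2 → ∀ t, ⁅Zc Γ p t, (⊤ : Subgroup Γ)⁆ ≤ Zc Γ p (t+2)) :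
    ∀ k, ∀ x ∈ Zc Γ p k, ∃ y : Γ, x = y ^ (p ^ k) := by
  intro k
  induction k with
  | zero => intro x _; exact ⟨x, by rw [pow_zero, pow_one]⟩
  | succ k ihk =>
      intro x hx
      obtain ⟨v, hv, rfl⟩ := Zc_step_pow hp hΓ hcas hcas2 (by omega) hx
      simp only [Nat.add_sub_cancel] at hv
      obtain ⟨y, rfl⟩ := ihk v hv
      exact ⟨y, by rw [← pow_mul, pow_succ]⟩

end Absorb

end SV19


namespace SV19

open Subgroup

variable {Γ : Type*} [Group Γ]

section Layer

variable [Finite Γ] {p : ℕ}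

lemma layer_inj (hp : p.Prime) (hΓ : IsPGroup p Γ)
    (hcas : ∀ t, ⁅Zc Γ p t, (⊤ : Subgroup Γ)⁆ ≤ Zc Γ p (t+1))
    (hcas2 : p = 2 → ∀ t, ⁅Zc Γ p t, (⊤ : Subgroup Γ)⁆ ≤ Zc Γ p (t+2))
    {k : ℕ}
    (hcard : (Zc Γ p (k+2)).relIndex (Zc Γ p (k+1)) = (Zc Γ p (k+1)).relIndex (Zc Γ p k))
    {x : Γ} (hx : x ∈ Zc Γ p k) (hxp : x ^ p ∈ Zc Γ p (k+2)) : x ∈ Zc Γ p (k+1) := by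
  haveI h2n : (Zc Γ p (k+2)).Normal := Zc_normal p (k+2)
  haveI h1n : (Zc Γ p (k+1)).Normal := Zc_normal p (k+1)
  haveI : ((Zc Γ p (k+2)).subgroupOf (Zc Γ p (k+1))).Normal := Subgroup.normal_subgroupOf
  set T := (↥(Zc Γ p (k+1)) ⧸ (Zc Γ p (k+2)).subgroupOf (Zc Γ p (k+1))) with hT
  have hfmul : ∀ a b : ↥(Zc Γ p k),
      (QuotientGroup.mk (⟨((a * b : ↥(Zc Γ p k)) : Γ) ^ p, Zc_pow_mem (a * b).2⟩ :
        ↥(Zc Γ p (k+1))) : T) =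
      QuotientGroup.mk ⟨(a : Γ) ^ p, Zc_pow_mem a.2⟩ *
        QuotientGroup.mk ⟨(b : Γ) ^ p, Zc_pow_mem b.2⟩ := by
    intro a b
    rw [← QuotientGroup.mk_mul, QuotientGroup.eq]
    rw [Subgroup.mem_subgroupOf]
    obtain ⟨w, hw, heq⟩ := pow_mul_pow_absorb (v := (b : Γ)) hp hΓ hcas hcas2
      (by omega : 1 ≤ k + 1) (by simpa using b.2) (a : Γ)
    have : ((⟨((a * b : ↥(Zc Γ p k)) : Γ) ^ p, Zc_pow_mem (a * b).2⟩ : ↥(Zc Γ p (k+1)))⁻¹ *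
        (⟨(a : Γ) ^ p, Zc_pow_mem a.2⟩ * ⟨(b : Γ) ^ p, Zc_pow_mem b.2⟩) : ↥(Zc Γ p (k+1))) =
        ⟨(((a : Γ) * b) ^ p)⁻¹ * ((a : Γ) ^ p * (b : Γ) ^ p), by
          rw [heq]
          have : (((a : Γ) * b) ^ p)⁻¹ * (((a : Γ) * b) ^ p * w) = w := by group
          rw [this]
          exact ((Zc_succ_le p (k+1)) hw)⟩ := by
      ext
      simp
    rw [this]
    show (((a : Γ) * b) ^ p)⁻¹ * ((a : Γ) ^ p * (b : Γ) ^ p) ∈ Zc Γ p (k+2)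
    rw [heq, show (((a : Γ) * b) ^ p)⁻¹ * (((a : Γ) * b) ^ p * w) = w by group]
    exact hw
  set f : ↥(Zc Γ p k) →* T :=
    { toFun := fun a => QuotientGroup.mk ⟨(a : Γ) ^ p, Zc_pow_mem a.2⟩
      map_one' := by
        apply (QuotientGroup.eq_one_iff _).2
        rw [Subgroup.mem_subgroupOf]
        simpa using (Zc Γ p (k+2)).one_mem
      map_mul' := hfmul } with hf
  have hsurj : Function.Surjective f := by
    intro t
    obtain ⟨q, rfl⟩ := QuotientGroup.mk_surjective t
    obtain ⟨v, hv, hveq⟩ := Zc_step_pow hp hΓ hcas hcas2 (by omega : 1 ≤ k + 1)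
      (q.2 : (q : Γ) ∈ Zc Γ p (k+1))
    simp only [Nat.add_sub_cancel] at hv
    refine ⟨⟨v, hv⟩, ?_⟩
    show QuotientGroup.mk _ = QuotientGroup.mk q
    congr 1
    ext
    exact hveq.symm
  have hkerA : (Zc Γ p (k+1)).subgroupOf (Zc Γ p k) ≤ f.ker := by
    intro a ha
    rw [Subgroup.mem_subgroupOf] at ha
    rw [MonoidHom.mem_ker]
    show (QuotientGroup.mk ⟨(a : Γ) ^ p, Zc_pow_mem a.2⟩ : T) = 1
    rw [QuotientGroup.eq_one_iff, Subgroup.mem_subgroupOf]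
    exact Zc_pow_mem ha
  -- counting
  have hc1 : Nat.card (↥(Zc Γ p k) ⧸ f.ker) = Nat.card T :=
    Nat.card_congr (QuotientGroup.quotientKerEquivOfSurjective f hsurj).toEquiv
  have hc2 : Nat.card T = (Zc Γ p (k+2)).relIndex (Zc Γ p (k+1)) := by
    rw [Subgroup.relIndex, Subgroup.index_eq_card]
  have hc3 : Nat.card (↥(Zc Γ p k) ⧸ (Zc Γ p (k+1)).subgroupOf (Zc Γ p k)) =
      (Zc Γ p (k+1)).relIndex (Zc Γ p k) := by
    rw [Subgroup.relIndex, Subgroup.index_eq_card]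
  have hq : Nat.card (↥(Zc Γ p k) ⧸ f.ker) =
      Nat.card (↥(Zc Γ p k) ⧸ (Zc Γ p (k+1)).subgroupOf (Zc Γ p k)) := by
    rw [hc1, hc2, hcard, ← hc3]
  have htot1 := Subgroup.card_eq_card_quotient_mul_card_subgroup f.ker
  have htot2 := Subgroup.card_eq_card_quotient_mul_card_subgroup
    ((Zc Γ p (k+1)).subgroupOf (Zc Γ p k))
  have hpos : 0 < Nat.card (↥(Zc Γ p k) ⧸ f.ker) := Nat.card_pos
  have hcardker : Nat.card f.ker ≤ Nat.card ((Zc Γ p (k+1)).subgroupOf (Zc Γ p k)) := by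
    rw [htot1] at htot2
    rw [hq] at htot2
    have h5 := Nat.eq_of_mul_eq_mul_left (hq ▸ hpos) htot2
    omega
  have hAeq : (Zc Γ p (k+1)).subgroupOf (Zc Γ p k) = f.ker :=
    Subgroup.eq_of_le_of_card_ge hkerA hcardker
  -- conclude
  have hxker : (⟨x, hx⟩ : ↥(Zc Γ p k)) ∈ f.ker := by
    rw [MonoidHom.mem_ker]
    show (QuotientGroup.mk ⟨x ^ p, Zc_pow_mem hx⟩ : T) = 1
    rw [QuotientGroup.eq_one_iff, Subgroup.mem_subgroupOf]
    exact hxp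
  rw [← hAeq, Subgroup.mem_subgroupOf] at hxker
  exact hxker

end Layer

end SV19


namespace SV19

open Subgroup

variable {Γ : Type*} [Group Γ]

lemma Zc_eq_subgroupPow [Finite Γ] {p : ℕ} (hp : p.Prime) (hΓ : IsPGroup p Γ)
    (hcas : ∀ t, ⁅Zc Γ p t, (⊤ : Subgroup Γ)⁆ ≤ Zc Γ p (t+1))
    (hcas2 : p = 2 → ∀ t, ⁅Zc Γ p t, (⊤ : Subgroup Γ)⁆ ≤ Zc Γ p (t+2)) (k : ℕ) :
    Zc Γ p k = subgroupPow Γ (p ^ k) := by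
  apply le_antisymm
  · intro x hx
    obtain ⟨y, rfl⟩ := Zc_elements hp hΓ hcas hcas2 k x hx
    exact Subgroup.subset_closure ⟨y, rfl⟩
  · apply Subgroup.closure_le _ |>.2
    rintro x ⟨y, rfl⟩
    have := Zc_pow_pow_mem (p := p) (k := 0) (Subgroup.mem_top y) k
    simpa using this

/-- order bounded by `p^s` forces membership in `Z_{m-s}` and hence a `p^{m-s}`-th root -/
lemma omega_lemma [Finite Γ] {p : ℕ} (hp : p.Prime) (hΓ : IsPGroup p Γ)
    (hcas : ∀ t, ⁅Zc Γ p t, (⊤ : Subgroup Γ)⁆ ≤ Zc Γ p (t+1))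
    (hcas2 : p = 2 → ∀ t, ⁅Zc Γ p t, (⊤ : Subgroup Γ)⁆ ≤ Zc Γ p (t+2))
    {m : ℕ} (hexp : Monoid.exponent Γ = p ^ m)
    (huni : ∀ i, Zc Γ p i ≠ ⊥ →
      (Zc Γ p (i+1)).relIndex (Zc Γ p i) = (Zc Γ p 1).index)
    {v : Γ} {s : ℕ} (hv : v ^ (p ^ s) = 1) :
    ∃ w : Γ, v = w ^ (p ^ (m - s)) := by
  classical
  have hZm : Zc Γ p m = ⊥ := by
    rw [Subgroup.eq_bot_iff_forall]
    intro x hx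
    obtain ⟨y, rfl⟩ := Zc_elements hp hΓ hcas hcas2 m x hx
    rw [← hexp]
    exact Monoid.pow_exponent_eq_one y
  by_cases hv1 : v = 1
  · exact ⟨1, by rw [hv1, one_pow]⟩
  -- an element of maximal order
  have hgex : ∀ k, k + 1 ≤ m → Zc Γ p k ≠ ⊥ := by
    intro k hk hbot
    have hex1 : ∃ g : Γ, g ^ (p ^ (m-1)) ≠ 1 := by
      by_contra hall
      push_neg at hall
      have hd := Monoid.exponent_dvd_of_forall_pow_eq_one hall
      rw [hexp] at hd
      have := Nat.le_of_dvd (Nat.pow_pos (n := m - 1) hp.pos) hd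
      have h1 := Nat.pow_lt_pow_right hp.one_lt (show m - 1 < m by omega)
      omega
    obtain ⟨g, hg⟩ := hex1
    have h1 : g ^ (p ^ k) ∈ Zc Γ p k := by
      have := Zc_pow_pow_mem (p := p) (k := 0) (Subgroup.mem_top g) k
      simpa using this
    rw [hbot, Subgroup.mem_bot] at h1
    have h2 : g ^ (p ^ (m-1)) = 1 := by
      have harith : p ^ k * p ^ (m - 1 - k) = p ^ (m-1) := by
        rw [← pow_add]
        congr 1
        omega
      have hthis : (g ^ (p ^ k)) ^ (p ^ (m - 1 - k)) = g ^ (p ^ (m-1)) := by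
        rw [← pow_mul, harith]
      rw [← hthis, h1, one_pow]
    exact hg h2
  have hrel : ∀ k, k + 2 ≤ m →
      (Zc Γ p (k+2)).relIndex (Zc Γ p (k+1)) = (Zc Γ p (k+1)).relIndex (Zc Γ p k) := by
    intro k hk
    have h1 := huni (k+1) (hgex (k+1) (by omega))
    have h2 := huni k (hgex k (by omega))
    rw [h1, h2]
  -- depth of v
  have hex : ∃ n, v ∉ Zc Γ p n := ⟨m, by rw [hZm]; simpa [Subgroup.mem_bot] using hv1⟩
  set k₀ := Nat.find hex with hk₀
  have hk₀spec : v ∉ Zc Γ p k₀ := Nat.find_spec hex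
  have hk₀pos : 1 ≤ k₀ := by
    rcases Nat.eq_zero_or_pos k₀ with h | h
    · exfalso; apply hk₀spec; rw [h, Zc_zero]; trivial
    · exact h
  have hk₀le : k₀ ≤ m := Nat.find_le (by rw [hZm]; simpa [Subgroup.mem_bot] using hv1)
  set k := k₀ - 1 with hkdef
  have hvk : v ∈ Zc Γ p k := by
    by_contra hcon
    have h5 : k₀ ≤ k := Nat.find_le hcon
    omega
  have hvk1 : v ∉ Zc Γ p (k+1) := by
    rw [show k + 1 = k₀ by omega]
    exact hk₀spec
  -- order lower bound by depth
  have hord : ∀ t, k + t + 1 ≤ m → v ^ (p ^ t) ∉ Zc Γ p (k + t + 1) := by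
    intro t
    induction t with
    | zero => intro _; simpa using hvk1
    | succ t ih =>
        intro hmt
        have iht := ih (by omega)
        intro hmem
        apply iht
        have h1 : v ^ (p ^ t) ∈ Zc Γ p (k + t) := Zc_pow_pow_mem hvk t
        have h2 : (v ^ (p ^ t)) ^ p ∈ Zc Γ p (k + t + 2) := by
          rw [← pow_mul, ← pow_succ]
          rw [show k + t + 2 = k + (t+1) + 1 by omega]
          exact hmem
        exact layer_inj hp hΓ hcas hcas2 (hrel (k+t) (by omega)) h1 h2
  -- conclude
  have hks : m - s ≤ k := by
    by_contra hcon
    push_neg at hcon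
    have hst : k + s + 1 ≤ m := by omega
    apply hord s hst
    rw [hv]
    exact Subgroup.one_mem _
  have hmem : v ∈ Zc Γ p (m - s) := Zc_antitone hks hvk
  obtain ⟨w, hw⟩ := Zc_elements hp hΓ hcas hcas2 (m - s) v hmem
  exact ⟨w, hw⟩

end SV19


open Subgroup SV19

theorem stmt19 {p : ℕ} (hp : p.Prime) {G : Type} [Group G] [Finite G]
    (hG : IsPGroup p G)
    (H : Subgroup G) (hHmax : H.index = p)
    (φ : H →* G) (hφ : IsSimpleVirtualEndo H φ)
    (U : Subgroup G) [hUn : U.Normal] (hUH : U ≤ H) (hUnt : U ≠ ⊥)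
    -- `U` is powerful
    (hpowerful : commutator U ≤ subgroupPow U (if p = 2 then 4 else p))
    -- `U` is uniform: the quotients `U^{p^i}/U^{p^{i+1}}` all have the same order,
    -- down to the trivial group
    (huniform : ∀ i : ℕ, subgroupPow U (p ^ i) ≠ ⊥ →
      (subgroupPow U (p ^ (i + 1))).relIndex (subgroupPow U (p ^ i)) =
        (subgroupPow U p).index) :
    (p ≠ 2 → Monoid.exponent U ≤ Monoid.exponent (G ⧸ U)) ∧
    (p = 2 → Monoid.exponent U ≤ 4 * Monoid.exponent (G ⧸ U)) := by
  haveI := Fact.mk hp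
  have hΓU : IsPGroup p ↥U := hG.to_subgroup U
  -- exponents are powers of p
  obtain ⟨nU, hnU⟩ := IsPGroup.iff_card.1 hΓU
  obtain ⟨m, hmle, hexpU⟩ := (Nat.dvd_prime_pow hp).1
    (hnU ▸ Monoid.exponent_dvd_of_forall_pow_eq_one (fun g : ↥U => pow_card_eq_one'))
  have hQpg : IsPGroup p (G ⧸ U) := hG.to_quotient U
  obtain ⟨nQ, hnQ⟩ := IsPGroup.iff_card.1 hQpg
  obtain ⟨c, hcle, hexpQ⟩ := (Nat.dvd_prime_pow hp).1
    (hnQ ▸ Monoid.exponent_dvd_of_forall_pow_eq_one (fun g : G ⧸ U => pow_card_eq_one'))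
  -- cascades
  have hcaspair : (∀ t, ⁅Zc ↥U p t, (⊤ : Subgroup ↥U)⁆ ≤ Zc ↥U p (t+1)) ∧
      (p = 2 → ∀ t, ⁅Zc ↥U p t, (⊤ : Subgroup ↥U)⁆ ≤ Zc ↥U p (t+2)) := by
    by_cases hp2 : p = 2
    · subst hp2
      have hb2 : ⁅(⊤ : Subgroup ↥U), (⊤ : Subgroup ↥U)⁆ ≤ Zc ↥U 2 2 := by
        have h1 : commutator ↥U ≤ subgroupPow ↥U 4 := by simpa using hpowerful
        rw [commutator_def] at h1
        refine le_trans h1 ?_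
        apply Subgroup.closure_le _ |>.2
        rintro x ⟨y, rfl⟩
        have h2 : y ^ 2 ∈ Zc ↥U 2 1 := Zc_pow_mem (Subgroup.mem_top y)
        have h3 : (y ^ 2) ^ 2 ∈ Zc ↥U 2 2 := Zc_pow_mem h2
        rw [← pow_mul] at h3
        norm_num at h3
        exact h3
      have hc2 := cascade_two hΓU hb2
      exact ⟨fun t => (hc2 t).trans (Zc_succ_le 2 (t+1)), fun _ => hc2⟩
    · have hodd := hp.odd_of_ne_two hp2
      have hb1 : ⁅(⊤ : Subgroup ↥U), (⊤ : Subgroup ↥U)⁆ ≤ Zc ↥U p 1 := by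
        have h1 : commutator ↥U ≤ subgroupPow ↥U p := by
          simpa [hp2] using hpowerful
        rw [commutator_def] at h1
        refine le_trans h1 ?_
        apply Subgroup.closure_le _ |>.2
        rintro x ⟨y, rfl⟩
        exact Zc_pow_mem (Subgroup.mem_top y)
      exact ⟨cascade_odd hp hΓU hodd hb1, fun h => absurd h hp2⟩
  obtain ⟨hcas, hcas2⟩ := hcaspair
  have hZeq : ∀ i, Zc ↥U p i = subgroupPow ↥U (p ^ i) :=
    Zc_eq_subgroupPow hp hΓU hcas hcas2
  have huni' : ∀ i, Zc ↥U p i ≠ ⊥ →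
      (Zc ↥U p (i+1)).relIndex (Zc ↥U p i) = (Zc ↥U p 1).index := by
    intro i hne
    rw [hZeq (i+1), hZeq i, hZeq 1, pow_one]
    exact huniform i (by rw [← hZeq i]; exact hne)
  -- main inequality
  have hkey : Monoid.exponent ↥U ≤ Monoid.exponent (G ⧸ U) := by
    rw [hexpU, hexpQ]
    have hmc : m ≤ c := by
      by_contra hmc
      push_neg at hmc   -- c < m
      -- the invariant subgroup
      set Tset : Set G := {x : G | ∃ u ∈ U, u ^ (p ^ (m-1)) = x} with hTset
      set K := Subgroup.closure Tset with hK
      have hKnormal : K.Normal := by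
        apply closure_normal_of_conj
        rintro x ⟨u, huU, rfl⟩ g
        exact ⟨g * u * g⁻¹, hUn.conj_mem u huU g, by rw [conj_pow]⟩
      have hKU : K ≤ U := by
        apply Subgroup.closure_le _ |>.2
        rintro x ⟨u, huU, rfl⟩
        exact pow_mem huU _
      have hKH : K ≤ H := hKU.trans hUH
      -- K is nontrivial
      have hex1 : ∃ x : ↥U, x ^ (p ^ (m-1)) ≠ 1 := by
        by_contra hall
        push_neg at hall
        have hd := Monoid.exponent_dvd_of_forall_pow_eq_one hall
        rw [hexpU] at hd
        have h5 := Nat.le_of_dvd (Nat.pow_pos (n := m - 1) hp.pos) hd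
        have h6 := Nat.pow_lt_pow_right hp.one_lt (show m - 1 < m by omega)
        omega
      have hKbot : K ≠ ⊥ := by
        obtain ⟨x, hx⟩ := hex1
        intro hbot
        have h1 : ((x : G)) ^ (p ^ (m-1)) ∈ K :=
          Subgroup.subset_closure ⟨(x : G), x.2, rfl⟩
        rw [hbot, Subgroup.mem_bot] at h1
        apply hx
        have h2 : ((x ^ (p ^ (m-1)) : ↥U) : G) = 1 := by
          push_cast
          exact h1
        exact Subtype.ext h2
      -- K is φ-invariant
      have hKinv : Subgroup.map φ (K.subgroupOf H) ≤ K := by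
        rintro _ ⟨a, haK0, rfl⟩
        have haK : (a : G) ∈ K := Subgroup.mem_subgroupOf.1 haK0
        have harith1 : p ^ c * p ^ (m - 1 - c) = p ^ (m - 1) := by
          rw [← pow_add, show c + (m - 1 - c) = m - 1 from by omega]
        have harith2 : p ^ c * p ^ (m - c) = p ^ m := by
          rw [← pow_add, show c + (m - c) = m from by omega]
        have hgen : ∀ x, x ∈ K → ∀ (hxh : x ∈ H), φ ⟨x, hxh⟩ ∈ K := by
          intro x hx
          induction hx using Subgroup.closure_induction with
          | mem t ht =>
              intro hxh
              obtain ⟨u, huU, hueq⟩ := ht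
              -- φ(u^{p^{m-1}}) = φ(u)^{p^{m-1}}
              have h1 : (⟨t, hxh⟩ : ↥H) =
                  (⟨u, hUH huU⟩ : ↥H) ^ (p ^ (m-1)) := by
                ext
                push_cast
                exact hueq.symm
              rw [h1, map_pow]
              set g₀ := φ (⟨u, hUH huU⟩ : ↥H) with hg₀def
              -- g₀^{p^c} lands in U
              have hg₀ : g₀ ^ (p ^ c) ∈ U := by
                have h2 : (QuotientGroup.mk' U) (g₀ ^ (p ^ c)) = 1 := by
                  rw [map_pow]
                  have h3 : ((QuotientGroup.mk' U) g₀) ^ Monoid.exponent (G ⧸ U) = 1 :=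
                    Monoid.pow_exponent_eq_one _
                  rw [hexpQ] at h3
                  exact h3
                exact (QuotientGroup.eq_one_iff _).1 h2
              -- order of g₀ divides p^m
              have hg₀m : g₀ ^ (p ^ m) = 1 := by
                have h4 : ((⟨u, hUH huU⟩ : ↥H)) ^ (p ^ m) = 1 := by
                  ext
                  push_cast
                  have h5 : ((⟨u, huU⟩ : ↥U)) ^ (p ^ m) = 1 := by
                    have := Monoid.pow_exponent_eq_one (⟨u, huU⟩ : ↥U)
                    rw [hexpU] at this
                    exact this
                  have h6 := congrArg (Subtype.val) h5
                  push_cast at h6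
                  exact h6
                rw [hg₀def, ← map_pow, h4, map_one]
              set vU : ↥U := ⟨g₀ ^ (p ^ c), hg₀⟩ with hvU
              have hvord : vU ^ (p ^ (m - c)) = 1 := by
                ext
                push_cast
                rw [← pow_mul, harith2]
                exact hg₀m
              obtain ⟨w, hw⟩ := omega_lemma hp hΓU hcas hcas2 hexpU huni' hvord
              rw [show m - (m - c) = c by omega] at hw
              -- conclude
              have hfin : g₀ ^ (p ^ (m-1)) = ((w : G)) ^ (p ^ (m-1)) := by
                have h7 : g₀ ^ (p ^ (m-1)) = (g₀ ^ (p ^ c)) ^ (p ^ (m-1-c)) := by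
                  rw [← pow_mul, harith1]
                have h8 : ((vU : G)) = ((w : G)) ^ (p ^ c) := by
                  rw [hw]
                  push_cast
                  rfl
                rw [h7]
                have h9 : (g₀ ^ (p ^ c)) = ((vU : G)) := rfl
                rw [h9, h8, ← pow_mul, harith1]
              rw [hfin]
              exact Subgroup.subset_closure ⟨(w : G), w.2, rfl⟩
          | one =>
              intro hxh
              have h1 : (⟨(1 : G), hxh⟩ : ↥H) = 1 := by ext; rfl
              rw [h1, map_one]
              exact one_mem K
          | mul x y hxK hyK ihx ihy =>
              intro hxh
              have h1 : (⟨x * y, hxh⟩ : ↥H) =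
                  ⟨x, hKH hxK⟩ * ⟨y, hKH hyK⟩ := by ext; rfl
              rw [h1, map_mul]
              exact mul_mem (ihx (hKH hxK)) (ihy (hKH hyK))
          | inv x hxK ihx =>
              intro hxh
              have h1 : (⟨x⁻¹, hxh⟩ : ↥H) = (⟨x, hKH hxK⟩)⁻¹ := by ext; rfl
              rw [h1, map_inv]
              exact inv_mem (ihx (hKH hxK))
        have h2 : φ a = φ ⟨(a : G), a.2⟩ := by
          congr 1
        rw [h2]
        exact hgen (a : G) haK a.2
      exact hKbot (hφ K hKH hKnormal hKinv)
    exact Nat.pow_le_pow_right hp.pos hmc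
  refine ⟨fun _ => hkey, fun _ => ?_⟩
  calc Monoid.exponent ↥U ≤ Monoid.exponent (G ⧸ U) := hkey
    _ ≤ 4 * Monoid.exponent (G ⧸ U) := Nat.le_mul_of_pos_left _ (by norm_num)
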